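/- Let n ≥ 2 and let Σ = {±e_k ± e_l : 1 ≤ k < l ≤ n} ∪ {±e_k : 1 ≤ k ≤ n} ⊂ ℝ^n be the root system of type B_n with simple roots α_k = e_k − e_{k+1} (1 ≤ k ≤ n−1) and α_n = e_n. Let 1 ≤ i < n, let S = {α_k : 1 ≤ k ≤ n−1, k ≠ i}, and let p be the orthogonal projection of ℝ^n onto the orthogonal complement of the span of S. Write ᾱ_i = p(α_i) and ᾱ_n = p(α_n). Then ᾱ_i and ᾱ_n are linearly independent and the set of reduced restricted roots Σ_red(S) equals {±ᾱ_i, ±ᾱ_n, ±(ᾱ_i + ᾱ_n), ±(ᾱ_i + 2ᾱ_n)}. -/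

import Mathlib

noncomputable section

/-- The `k`-th standard basis vector of `ℝ^N`. -/
def e {N : ℕ} (k : Fin N) : EuclideanSpace ℝ (Fin N) := EuclideanSpace.single k 1

/-- Orthogonal projection of `ℝ^N` onto the orthogonal complement of the span of `S`. -/
def projC {N : ℕ} (S : Set (EuclideanSpace ℝ (Fin N))) (v : EuclideanSpace ℝ (Fin N)) :
    EuclideanSpace ℝ (Fin N) :=
  (Submodule.orthogonalProjectionOnto ((Submodule.span ℝ S)ᗮ) v : EuclideanSpace ℝ (Fin N))

/-- The set of restricted roots `Σ(S) = p(Σ) \ {0}`. -/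
def restrictedRoots {N : ℕ} (Rts S : Set (EuclideanSpace ℝ (Fin N))) :
    Set (EuclideanSpace ℝ (Fin N)) :=
  (projC S '' Rts) \ {0}

/-- The set of reduced restricted roots: those `x ∈ Σ(S)` with `x/2 ∉ Σ(S)`. -/
def reducedRestrictedRoots {N : ℕ} (Rts S : Set (EuclideanSpace ℝ (Fin N))) :
    Set (EuclideanSpace ℝ (Fin N)) :=
  {x ∈ restrictedRoots Rts S | ¬ (1 / 2 : ℝ) • x ∈ restrictedRoots Rts S}

/-- The root system of type `B_n` in `ℝ^n`: `±e_k ± e_l` (`k < l`) and `±e_k`. -/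
def Broots (n : ℕ) : Set (EuclideanSpace ℝ (Fin n)) :=
  {v | ∃ k l : Fin n, k < l ∧
    (v = e k - e l ∨ v = e k + e l ∨ v = -e k + e l ∨ v = -e k - e l)} ∪
  {v | ∃ k : Fin n, v = e k ∨ v = -e k}

/-- The simple roots of `B_n`: `α_k = e_k − e_{k+1}` (`1 ≤ k ≤ n−1`) and `α_n = e_n`
(indexed here by `Fin n`). -/
def Bsimple (n : ℕ) (k : Fin n) : EuclideanSpace ℝ (Fin n) :=
  if h : (k : ℕ) + 1 < n then e k - e ⟨(k : ℕ) + 1, h⟩ else e k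

namespace Statement7Aux
open Submodule Finset

variable {n : ℕ}

def S0 (n : ℕ) (i : Fin n) : Set (EuclideanSpace ℝ (Fin n)) :=
  {v | ∃ k : Fin n, k ≠ i ∧ (k : ℕ) + 1 < n ∧ v = Bsimple n k}

def fv (n : ℕ) (i : Fin n) : EuclideanSpace ℝ (Fin n) :=
  WithLp.toLp 2 (fun k => if (k : ℕ) ≤ (i : ℕ) then (((i : ℕ) : ℝ) + 1)⁻¹ else 0)

def gv (n : ℕ) (i : Fin n) : EuclideanSpace ℝ (Fin n) :=
  WithLp.toLp 2 (fun k => if (k : ℕ) ≤ (i : ℕ) then 0 else ((n : ℝ) - (((i : ℕ) : ℝ) + 1))⁻¹)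

lemma fv_apply (i k : Fin n) :
    fv n i k = if (k : ℕ) ≤ (i : ℕ) then (((i : ℕ) : ℝ) + 1)⁻¹ else 0 := rfl

lemma gv_apply (i k : Fin n) :
    gv n i k = if (k : ℕ) ≤ (i : ℕ) then 0 else ((n : ℝ) - (((i : ℕ) : ℝ) + 1))⁻¹ := rfl

lemma hA (i : Fin n) : (((i : ℕ) : ℝ) + 1) ≠ 0 := by positivity

lemma hB (i : Fin n) (hi : (i : ℕ) + 1 < n) : ((n : ℝ) - (((i : ℕ) : ℝ) + 1)) ≠ 0 := by
  have : ((i : ℕ) : ℝ) + 1 < (n : ℝ) := by exact_mod_cast hi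
  linarith

lemma mem_orth_span {S : Set (EuclideanSpace ℝ (Fin n))} {v : EuclideanSpace ℝ (Fin n)}
    (h : ∀ u ∈ S, inner (𝕜 := ℝ) u v = (0 : ℝ)) : v ∈ (span ℝ S)ᗮ := by
  rw [Submodule.mem_orthogonal]
  intro u hu
  induction hu using Submodule.span_induction with
  | mem x hx => exact h x hx
  | zero => simp
  | add x y hx hy ihx ihy => rw [inner_add_left, ihx, ihy]; ring
  | smul a x hx ihx => rw [real_inner_smul_left, ihx]; ring

lemma fv_orth (i : Fin n) : fv n i ∈ (span ℝ (S0 n i))ᗮ := by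
  apply mem_orth_span
  rintro u ⟨k, hki, hkn, rfl⟩
  have hvk : (k : ℕ) ≠ (i : ℕ) := fun h => hki (Fin.val_injective h)
  simp only [Bsimple, dif_pos hkn]
  rw [inner_sub_left]
  rw [show (e k) = EuclideanSpace.single k (1 : ℝ) from rfl,
    show (e (⟨(k : ℕ) + 1, hkn⟩ : Fin n)) = EuclideanSpace.single (⟨(k : ℕ) + 1, hkn⟩ : Fin n) (1 : ℝ) from rfl]
  rw [EuclideanSpace.inner_single_left, EuclideanSpace.inner_single_left]
  simp only [map_one, one_mul]
  rw [fv_apply, fv_apply]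
  by_cases h : (k : ℕ) < (i : ℕ)
  · rw [if_pos (by omega), if_pos (by show (k : ℕ) + 1 ≤ (i : ℕ); omega)]; ring
  · rw [if_neg (by omega), if_neg (by show ¬ ((k : ℕ) + 1 ≤ (i : ℕ)); omega)]; ring

lemma gv_orth (i : Fin n) : gv n i ∈ (span ℝ (S0 n i))ᗮ := by
  apply mem_orth_span
  rintro u ⟨k, hki, hkn, rfl⟩
  have hvk : (k : ℕ) ≠ (i : ℕ) := fun h => hki (Fin.val_injective h)
  simp only [Bsimple, dif_pos hkn]
  rw [inner_sub_left]
  rw [show (e k) = EuclideanSpace.single k (1 : ℝ) from rfl,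
    show (e (⟨(k : ℕ) + 1, hkn⟩ : Fin n)) = EuclideanSpace.single (⟨(k : ℕ) + 1, hkn⟩ : Fin n) (1 : ℝ) from rfl]
  rw [EuclideanSpace.inner_single_left, EuclideanSpace.inner_single_left]
  simp only [map_one, one_mul]
  rw [gv_apply, gv_apply]
  by_cases h : (k : ℕ) < (i : ℕ)
  · rw [if_pos (by omega), if_pos (by show (k : ℕ) + 1 ≤ (i : ℕ); omega)]; ring
  · rw [if_neg (by omega), if_neg (by show ¬ ((k : ℕ) + 1 ≤ (i : ℕ)); omega)]; ring




lemma chain (i : Fin n) (d : ℕ) : ∀ j : ℕ, (hj : j + d < n) →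
    (j + d ≤ (i : ℕ) ∨ (i : ℕ) < j) →
    e (⟨j, by omega⟩ : Fin n) - e (⟨j + d, hj⟩ : Fin n) ∈ span ℝ (S0 n i) := by
  induction d with
  | zero =>
      intro j hj _
      have h : (⟨j + 0, hj⟩ : Fin n) = ⟨j, by omega⟩ := rfl
      rw [h, sub_self]; exact zero_mem _
  | succ d ih =>
      intro j hj hc
      have h1 : j + d < n := by omega
      have h2 : j + d + 1 < n := by omega
      have hstep : e (⟨j + d, h1⟩ : Fin n) - e (⟨j + d + 1, h2⟩ : Fin n) ∈ span ℝ (S0 n i) := by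
        apply subset_span
        refine ⟨⟨j + d, h1⟩, ?_, h2, ?_⟩
        · intro h
          have h' := congrArg Fin.val h
          have h'' : j + d = (i : ℕ) := h'
          omega
        · simp only [Bsimple, dif_pos h2]
      have hrec := ih j h1 (by omega)
      have hsum := Submodule.add_mem _ hrec hstep
      have heq : e (⟨j, by omega⟩ : Fin n) - e (⟨j + (d + 1), hj⟩ : Fin n)
          = (e (⟨j, by omega⟩ : Fin n) - e (⟨j + d, h1⟩ : Fin n))
            + (e (⟨j + d, h1⟩ : Fin n) - e (⟨j + d + 1, h2⟩ : Fin n)) := by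
        have h3 : (⟨j + (d + 1), hj⟩ : Fin n) = ⟨j + d + 1, h2⟩ := rfl
        rw [h3]; abel
      rw [heq]; exact hsum

lemma chain' (i k l : Fin n) (hkl : (k : ℕ) ≤ (l : ℕ))
    (h : (l : ℕ) ≤ (i : ℕ) ∨ (i : ℕ) < (k : ℕ)) :
    e k - e l ∈ span ℝ (S0 n i) := by
  have hln := l.isLt
  have h1 : (k : ℕ) + ((l : ℕ) - (k : ℕ)) < n := by omega
  have := chain i ((l : ℕ) - (k : ℕ)) (k : ℕ) h1 (by omega)
  have e2 : (⟨(k : ℕ) + ((l : ℕ) - (k : ℕ)), h1⟩ : Fin n) = l := by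
    apply Fin.ext; show (k : ℕ) + ((l : ℕ) - (k : ℕ)) = (l : ℕ); omega
  rw [e2] at this
  exact this

lemma pair (i k l : Fin n)
    (h : ((k : ℕ) ≤ (i : ℕ) ∧ (l : ℕ) ≤ (i : ℕ)) ∨ ((i : ℕ) < (k : ℕ) ∧ (i : ℕ) < (l : ℕ))) :
    e k - e l ∈ span ℝ (S0 n i) := by
  rcases le_total (k : ℕ) (l : ℕ) with h' | h'
  · exact chain' i k l h' (by omega)
  · have h2 := Submodule.neg_mem _ (chain' i l k h' (by omega))
    rwa [neg_sub] at h2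


lemma card_T1 (i : Fin n) :
    (univ.filter (fun k : Fin n => (k : ℕ) ≤ (i : ℕ))).card = (i : ℕ) + 1 := by
  have h : univ.filter (fun k : Fin n => (k : ℕ) ≤ (i : ℕ)) = Iic i := by
    ext k
    simp only [Finset.mem_filter, Finset.mem_univ, true_and, Finset.mem_Iic, Fin.le_def]
  rw [h, Fin.card_Iic]

lemma card_T2 (i : Fin n) (hi : (i : ℕ) + 1 < n) :
    (univ.filter (fun k : Fin n => ¬ ((k : ℕ) ≤ (i : ℕ)))).card = n - ((i : ℕ) + 1) := by
  rw [Finset.filter_not, Finset.card_sdiff_of_subset (Finset.filter_subset _ _), card_T1,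
    Finset.card_univ, Fintype.card_fin]

lemma fv_sum (i : Fin n) :
    fv n i = (((i : ℕ) : ℝ) + 1)⁻¹ • ∑ j ∈ univ.filter (fun k : Fin n => (k : ℕ) ≤ (i : ℕ)), e j := by
  ext k
  show fv n i k = ((((i : ℕ) : ℝ) + 1)⁻¹ • ∑ j ∈ univ.filter (fun k : Fin n => (k : ℕ) ≤ (i : ℕ)), e j) k
  rw [PiLp.smul_apply, WithLp.ofLp_sum, Finset.sum_apply]
  simp only [e, EuclideanSpace.single_apply, smul_eq_mul]
  rw [Finset.sum_ite_eq]
  by_cases hk : (k : ℕ) ≤ (i : ℕ)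
  · have h2 : k ≤ i := by rw [Fin.le_def]; omega
    simp [fv_apply, hk, h2]
  · have h2 : ¬ (k ≤ i) := by rw [Fin.le_def]; omega
    simp [fv_apply, hk, h2]

lemma gv_sum (i : Fin n) (hi : (i : ℕ) + 1 < n) :
    gv n i = ((n : ℝ) - (((i : ℕ) : ℝ) + 1))⁻¹ • ∑ j ∈ univ.filter (fun k : Fin n => ¬ ((k : ℕ) ≤ (i : ℕ))), e j := by
  ext k
  show gv n i k = (((n : ℝ) - (((i : ℕ) : ℝ) + 1))⁻¹ • ∑ j ∈ univ.filter (fun k : Fin n => ¬ ((k : ℕ) ≤ (i : ℕ))), e j) k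
  rw [PiLp.smul_apply, WithLp.ofLp_sum, Finset.sum_apply]
  simp only [e, EuclideanSpace.single_apply, smul_eq_mul]
  rw [Finset.sum_ite_eq]
  by_cases hk : (k : ℕ) ≤ (i : ℕ)
  · have h2 : ¬ (i < k) := by rw [Fin.lt_def]; omega
    simp [gv_apply, hk, h2]
  · have h2 : i < k := by rw [Fin.lt_def]; omega
    simp [gv_apply, hk, h2]

lemma cast_card2 (i : Fin n) (hi : (i : ℕ) + 1 < n) :
    ((n - ((i : ℕ) + 1) : ℕ) : ℝ) = (n : ℝ) - (((i : ℕ) : ℝ) + 1) := by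
  rw [Nat.cast_sub (by omega)]; push_cast; ring

lemma ek_sub_fv (i : Fin n) (k : Fin n) (hk : (k : ℕ) ≤ (i : ℕ)) :
    e k - fv n i ∈ span ℝ (S0 n i) := by
  have key : e k - fv n i
      = (((i : ℕ) : ℝ) + 1)⁻¹ • ∑ j ∈ univ.filter (fun k : Fin n => (k : ℕ) ≤ (i : ℕ)), (e k - e j) := by
    rw [fv_sum, Finset.sum_sub_distrib, Finset.sum_const, card_T1, smul_sub]
    congr 1
    rw [← Nat.cast_smul_eq_nsmul ℝ, smul_smul, Nat.cast_add, Nat.cast_one,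
      inv_mul_cancel₀ (hA i), one_smul]
  rw [key]
  refine Submodule.smul_mem _ _ (Submodule.sum_mem _ ?_)
  intro j hj
  exact pair i k j (Or.inl ⟨hk, (Finset.mem_filter.mp hj).2⟩)

lemma ek_sub_gv (i : Fin n) (hi : (i : ℕ) + 1 < n) (k : Fin n) (hk : ¬ ((k : ℕ) ≤ (i : ℕ))) :
    e k - gv n i ∈ span ℝ (S0 n i) := by
  have key : e k - gv n i
      = ((n : ℝ) - (((i : ℕ) : ℝ) + 1))⁻¹ • ∑ j ∈ univ.filter (fun k : Fin n => ¬ ((k : ℕ) ≤ (i : ℕ))), (e k - e j) := by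
    rw [gv_sum i hi, Finset.sum_sub_distrib, Finset.sum_const, card_T2 i hi, smul_sub]
    congr 1
    rw [← Nat.cast_smul_eq_nsmul ℝ, smul_smul, cast_card2 i hi,
      inv_mul_cancel₀ (hB i hi), one_smul]
  rw [key]
  refine Submodule.smul_mem _ _ (Submodule.sum_mem _ ?_)
  intro j hj
  exact pair i k j (Or.inr ⟨by omega, by have := (Finset.mem_filter.mp hj).2; omega⟩)

lemma projC_e (i : Fin n) (hi : (i : ℕ) + 1 < n) (k : Fin n) :
    projC (S0 n i) (e k) = if (k : ℕ) ≤ (i : ℕ) then fv n i else gv n i := by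
  unfold projC
  by_cases hk : (k : ℕ) ≤ (i : ℕ)
  · rw [if_pos hk]
    exact Submodule.eq_starProjection_of_mem_orthogonal (fv_orth i)
      (by rw [Submodule.orthogonal_orthogonal]; exact ek_sub_fv i k hk)
  · rw [if_neg hk]
    exact Submodule.eq_starProjection_of_mem_orthogonal (gv_orth i)
      (by rw [Submodule.orthogonal_orthogonal]; exact ek_sub_gv i hi k hk)

lemma projC_add (S : Set (EuclideanSpace ℝ (Fin n))) (x y : EuclideanSpace ℝ (Fin n)) :
    projC S (x + y) = projC S x + projC S y := by
  unfold projC; rw [map_add]; rfl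

lemma projC_neg (S : Set (EuclideanSpace ℝ (Fin n))) (x : EuclideanSpace ℝ (Fin n)) :
    projC S (-x) = - projC S x := by
  unfold projC; rw [map_neg]; rfl

lemma projC_sub (S : Set (EuclideanSpace ℝ (Fin n))) (x y : EuclideanSpace ℝ (Fin n)) :
    projC S (x - y) = projC S x - projC S y := by
  unfold projC; rw [map_sub]; rfl


lemma st_inj (i : Fin n) (hi : (i : ℕ) + 1 < n) {s t s' t' : ℝ}
    (h : s • fv n i + t • gv n i = s' • fv n i + t' • gv n i) : s = s' ∧ t = t' := by
  have hn0 : 0 < n := by omega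
  have hn1 : n - 1 < n := by omega
  have hA' : (((i : ℕ) : ℝ) + 1)⁻¹ ≠ 0 := inv_ne_zero (hA i)
  have hB' : ((n : ℝ) - (((i : ℕ) : ℝ) + 1))⁻¹ ≠ 0 := inv_ne_zero (hB i hi)
  have h0i : ((⟨0, hn0⟩ : Fin n) : ℕ) ≤ (i : ℕ) := by show 0 ≤ (i : ℕ); omega
  have hli : ¬ ((⟨n - 1, hn1⟩ : Fin n) : ℕ) ≤ (i : ℕ) := by show ¬ (n - 1 ≤ (i : ℕ)); omega
  have h0 := congrArg (fun v : EuclideanSpace ℝ (Fin n) => v ⟨0, hn0⟩) h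
  have hl := congrArg (fun v : EuclideanSpace ℝ (Fin n) => v ⟨n - 1, hn1⟩) h
  simp only [PiLp.add_apply, PiLp.smul_apply, fv_apply, gv_apply, if_pos h0i, if_neg hli,
    smul_eq_mul, mul_zero, add_zero, zero_add] at h0 hl
  exact ⟨mul_right_cancel₀ hA' h0, mul_right_cancel₀ hB' hl⟩

def pred12 (s t : ℝ) : Prop :=
  (s = 1 ∧ t = 0) ∨ (s = -1 ∧ t = 0) ∨ (s = 0 ∧ t = 1) ∨ (s = 0 ∧ t = -1) ∨
  (s = 1 ∧ t = -1) ∨ (s = -1 ∧ t = 1) ∨ (s = 1 ∧ t = 1) ∨ (s = -1 ∧ t = -1) ∨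
  (s = 2 ∧ t = 0) ∨ (s = -2 ∧ t = 0) ∨ (s = 0 ∧ t = 2) ∨ (s = 0 ∧ t = -2)

def pred8 (s t : ℝ) : Prop :=
  (s = 1 ∧ t = -1) ∨ (s = -1 ∧ t = 1) ∨ (s = 0 ∧ t = 1) ∨ (s = 0 ∧ t = -1) ∨
  (s = 1 ∧ t = 0) ∨ (s = -1 ∧ t = 0) ∨ (s = 1 ∧ t = 1) ∨ (s = -1 ∧ t = -1)

set_option maxHeartbeats 1000000 in
lemma rr_sub (i : Fin n) (hi : (i : ℕ) + 1 < n) :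
    ∀ x ∈ restrictedRoots (Broots n) (S0 n i),
      ∃ s t : ℝ, pred12 s t ∧ x = s • fv n i + t • gv n i := by
  intro x hx
  simp only [restrictedRoots, Set.mem_diff, Set.mem_image, Set.mem_singleton_iff] at hx
  obtain ⟨⟨v, hv, rfl⟩, hx0⟩ := hx
  simp only [Broots, Set.mem_union, Set.mem_setOf_eq] at hv
  have hP := projC_e i hi
  rcases hv with ⟨k, l, hkl, hforms⟩ | ⟨k, hk⟩
  · have hkl' : (k : ℕ) < (l : ℕ) := hkl
    rcases hforms with rfl | rfl | rfl | rfl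
    · by_cases hk1 : (k : ℕ) ≤ (i : ℕ) <;> by_cases hl1 : (l : ℕ) ≤ (i : ℕ)
      · exact absurd (by rw [projC_sub, hP k, hP l, if_pos hk1, if_pos hl1, sub_self]) hx0
      · exact ⟨1, -1, by unfold pred12; norm_num,
          by rw [projC_sub, hP k, hP l, if_pos hk1, if_neg hl1]; module⟩
      · omega
      · exact absurd (by rw [projC_sub, hP k, hP l, if_neg hk1, if_neg hl1, sub_self]) hx0
    · by_cases hk1 : (k : ℕ) ≤ (i : ℕ) <;> by_cases hl1 : (l : ℕ) ≤ (i : ℕ)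
      · exact ⟨2, 0, by unfold pred12; norm_num,
          by rw [projC_add, hP k, hP l, if_pos hk1, if_pos hl1]; module⟩
      · exact ⟨1, 1, by unfold pred12; norm_num,
          by rw [projC_add, hP k, hP l, if_pos hk1, if_neg hl1]; module⟩
      · omega
      · exact ⟨0, 2, by unfold pred12; norm_num,
          by rw [projC_add, hP k, hP l, if_neg hk1, if_neg hl1]; module⟩
    · by_cases hk1 : (k : ℕ) ≤ (i : ℕ) <;> by_cases hl1 : (l : ℕ) ≤ (i : ℕ)
      · exact absurd (by rw [projC_add, projC_neg, hP k, hP l, if_pos hk1, if_pos hl1,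
          neg_add_cancel]) hx0
      · exact ⟨-1, 1, by unfold pred12; norm_num,
          by rw [projC_add, projC_neg, hP k, hP l, if_pos hk1, if_neg hl1]; module⟩
      · omega
      · exact absurd (by rw [projC_add, projC_neg, hP k, hP l, if_neg hk1, if_neg hl1,
          neg_add_cancel]) hx0
    · by_cases hk1 : (k : ℕ) ≤ (i : ℕ) <;> by_cases hl1 : (l : ℕ) ≤ (i : ℕ)
      · exact ⟨-2, 0, by unfold pred12; norm_num,
          by rw [projC_sub, projC_neg, hP k, hP l, if_pos hk1, if_pos hl1]; module⟩
      · exact ⟨-1, -1, by unfold pred12; norm_num,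
          by rw [projC_sub, projC_neg, hP k, hP l, if_pos hk1, if_neg hl1]; module⟩
      · omega
      · exact ⟨0, -2, by unfold pred12; norm_num,
          by rw [projC_sub, projC_neg, hP k, hP l, if_neg hk1, if_neg hl1]; module⟩
  · rcases hk with rfl | rfl
    · by_cases hk1 : (k : ℕ) ≤ (i : ℕ)
      · exact ⟨1, 0, by unfold pred12; norm_num, by rw [hP k, if_pos hk1]; module⟩
      · exact ⟨0, 1, by unfold pred12; norm_num, by rw [hP k, if_neg hk1]; module⟩
    · by_cases hk1 : (k : ℕ) ≤ (i : ℕ)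
      · exact ⟨-1, 0, by unfold pred12; norm_num, by rw [projC_neg, hP k, if_pos hk1]; module⟩
      · exact ⟨0, -1, by unfold pred12; norm_num, by rw [projC_neg, hP k, if_neg hk1]; module⟩


lemma zero_eq : (0 : EuclideanSpace ℝ (Fin n)) = (0 : ℝ) • fv n i + (0 : ℝ) • gv n i := by
  module

set_option maxHeartbeats 1000000 in
lemma mem_rr (i : Fin n) (hi : (i : ℕ) + 1 < n) (s t : ℝ) (h8 : pred8 s t) :
    s • fv n i + t • gv n i ∈ restrictedRoots (Broots n) (S0 n i) := by
  have hn0 : 0 < n := by omega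
  have hn1 : n - 1 < n := by omega
  have hz : (⟨0, hn0⟩ : Fin n) < (⟨n - 1, hn1⟩ : Fin n) := by
    rw [Fin.lt_def]; show 0 < n - 1; omega
  have h0i : ((⟨0, hn0⟩ : Fin n) : ℕ) ≤ (i : ℕ) := by show 0 ≤ (i : ℕ); omega
  have hli : ¬ ((⟨n - 1, hn1⟩ : Fin n) : ℕ) ≤ (i : ℕ) := by show ¬ (n - 1 ≤ (i : ℕ)); omega
  have hP := projC_e i hi
  have hnz : s • fv n i + t • gv n i ≠ 0 := by
    intro h
    have h' : s • fv n i + t • gv n i = (0 : ℝ) • fv n i + (0 : ℝ) • gv n i := by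
      rw [h]; exact zero_eq
    obtain ⟨hs, ht⟩ := st_inj i hi h'
    have h10 : (1 : ℝ) ≠ 0 := one_ne_zero
    have hm10 : (-1 : ℝ) ≠ 0 := by norm_num
    rcases h8 with ⟨rfl, rfl⟩ | ⟨rfl, rfl⟩ | ⟨rfl, rfl⟩ | ⟨rfl, rfl⟩ | ⟨rfl, rfl⟩ | ⟨rfl, rfl⟩ | ⟨rfl, rfl⟩ | ⟨rfl, rfl⟩ <;>
      first
      | exact h10 hs
      | exact h10 ht
      | exact hm10 hs
      | exact hm10 ht
  simp only [restrictedRoots, Set.mem_diff, Set.mem_image, Set.mem_singleton_iff]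
  refine ⟨?_, hnz⟩
  have hBr1 : ∀ w, (w = e (⟨0, hn0⟩ : Fin n) - e (⟨n - 1, hn1⟩ : Fin n) ∨
      w = e (⟨0, hn0⟩ : Fin n) + e (⟨n - 1, hn1⟩ : Fin n) ∨
      w = -e (⟨0, hn0⟩ : Fin n) + e (⟨n - 1, hn1⟩ : Fin n) ∨
      w = -e (⟨0, hn0⟩ : Fin n) - e (⟨n - 1, hn1⟩ : Fin n)) → w ∈ Broots n := by
    intro w hw
    simp only [Broots, Set.mem_union, Set.mem_setOf_eq]
    exact Or.inl ⟨_, _, hz, hw⟩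
  have hBr2 : ∀ w, (w = e (⟨0, hn0⟩ : Fin n) ∨ w = -e (⟨0, hn0⟩ : Fin n)) → w ∈ Broots n := by
    intro w hw
    simp only [Broots, Set.mem_union, Set.mem_setOf_eq]
    exact Or.inr ⟨_, hw⟩
  have hBr3 : ∀ w, (w = e (⟨n - 1, hn1⟩ : Fin n) ∨ w = -e (⟨n - 1, hn1⟩ : Fin n)) → w ∈ Broots n := by
    intro w hw
    simp only [Broots, Set.mem_union, Set.mem_setOf_eq]
    exact Or.inr ⟨_, hw⟩
  rcases h8 with ⟨rfl, rfl⟩ | ⟨rfl, rfl⟩ | ⟨rfl, rfl⟩ | ⟨rfl, rfl⟩ | ⟨rfl, rfl⟩ | ⟨rfl, rfl⟩ | ⟨rfl, rfl⟩ | ⟨rfl, rfl⟩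
  · exact ⟨e ⟨0, hn0⟩ - e ⟨n - 1, hn1⟩, hBr1 _ (Or.inl rfl),
      by rw [projC_sub, hP, hP, if_pos h0i, if_neg hli]; module⟩
  · exact ⟨-e ⟨0, hn0⟩ + e ⟨n - 1, hn1⟩, hBr1 _ (Or.inr (Or.inr (Or.inl rfl))),
      by rw [projC_add, projC_neg, hP, hP, if_pos h0i, if_neg hli]; module⟩
  · exact ⟨e ⟨n - 1, hn1⟩, hBr3 _ (Or.inl rfl),
      by rw [hP, if_neg hli]; module⟩
  · exact ⟨-e ⟨n - 1, hn1⟩, hBr3 _ (Or.inr rfl),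
      by rw [projC_neg, hP, if_neg hli]; module⟩
  · exact ⟨e ⟨0, hn0⟩, hBr2 _ (Or.inl rfl),
      by rw [hP, if_pos h0i]; module⟩
  · exact ⟨-e ⟨0, hn0⟩, hBr2 _ (Or.inr rfl),
      by rw [projC_neg, hP, if_pos h0i]; module⟩
  · exact ⟨e ⟨0, hn0⟩ + e ⟨n - 1, hn1⟩, hBr1 _ (Or.inr (Or.inl rfl)),
      by rw [projC_add, hP, hP, if_pos h0i, if_neg hli]; module⟩
  · exact ⟨-e ⟨0, hn0⟩ - e ⟨n - 1, hn1⟩, hBr1 _ (Or.inr (Or.inr (Or.inr rfl))),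
      by rw [projC_sub, projC_neg, hP, hP, if_pos h0i, if_neg hli]; module⟩

set_option maxHeartbeats 1000000 in
lemma mem_red (i : Fin n) (hi : (i : ℕ) + 1 < n) (s t : ℝ) (h8 : pred8 s t) :
    s • fv n i + t • gv n i ∈ reducedRestrictedRoots (Broots n) (S0 n i) := by
  simp only [reducedRestrictedRoots, Set.mem_setOf_eq]
  refine ⟨mem_rr i hi s t h8, ?_⟩
  intro hmem
  obtain ⟨σ, τ, h12, heq⟩ := rr_sub i hi _ hmem
  have heq' : (s / 2) • fv n i + (t / 2) • gv n i = σ • fv n i + τ • gv n i := by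
    rw [← heq]; module
  obtain ⟨hs, ht⟩ := st_inj i hi heq'
  rw [← hs, ← ht] at h12
  rcases h8 with ⟨rfl, rfl⟩ | ⟨rfl, rfl⟩ | ⟨rfl, rfl⟩ | ⟨rfl, rfl⟩ | ⟨rfl, rfl⟩ | ⟨rfl, rfl⟩ | ⟨rfl, rfl⟩ | ⟨rfl, rfl⟩ <;>
    (unfold pred12 at h12; norm_num at h12)


end Statement7Aux

open Statement7Aux in
set_option maxHeartbeats 1600000 in
/-- In type `B_n` (`n ≥ 2`), removing the simple roots `α_i`
(`1 ≤ i < n`) and `α_n`, the projections `ᾱ_i, ᾱ_n` onto the orthogonal complement of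
the span of the remaining simple roots are linearly independent, and the set of reduced
restricted roots is `{±ᾱ_i, ±ᾱ_n, ±(ᾱ_i + ᾱ_n), ±(ᾱ_i + 2ᾱ_n)}` (type `B_2`). -/
theorem statement7 (n : ℕ) (hn : 2 ≤ n) (i : Fin n) (hi : (i : ℕ) + 1 < n)
    (S : Set (EuclideanSpace ℝ (Fin n)))
    (hS : S = {v | ∃ k : Fin n, k ≠ i ∧ (k : ℕ) + 1 < n ∧ v = Bsimple n k}) :
    LinearIndependent ℝ
      ![projC S (Bsimple n i), projC S (Bsimple n ⟨n - 1, by omega⟩)] ∧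
    reducedRestrictedRoots (Broots n) S =
      {projC S (Bsimple n i), -projC S (Bsimple n i),
       projC S (Bsimple n ⟨n - 1, by omega⟩), -projC S (Bsimple n ⟨n - 1, by omega⟩),
       projC S (Bsimple n i) + projC S (Bsimple n ⟨n - 1, by omega⟩),
       -(projC S (Bsimple n i) + projC S (Bsimple n ⟨n - 1, by omega⟩)),
       projC S (Bsimple n i) + (2 : ℝ) • projC S (Bsimple n ⟨n - 1, by omega⟩),
       -(projC S (Bsimple n i) + (2 : ℝ) • projC S (Bsimple n ⟨n - 1, by omega⟩))} := by
  have hS' : S = S0 n i := hS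
  subst hS'
  have hP := projC_e i hi
  have ha : projC (S0 n i) (Bsimple n i) = fv n i - gv n i := by
    simp only [Bsimple, dif_pos hi]
    rw [projC_sub, hP i, hP ⟨(i : ℕ) + 1, hi⟩, if_pos le_rfl,
      if_neg (by show ¬ ((i : ℕ) + 1 ≤ (i : ℕ)); omega)]
  have hb : ∀ h : n - 1 < n, projC (S0 n i) (Bsimple n ⟨n - 1, h⟩) = gv n i := by
    intro h
    simp only [Bsimple, dif_neg (by show ¬ (n - 1 + 1 < n); omega : ¬ ((⟨n - 1, h⟩ : Fin n) : ℕ) + 1 < n)]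
    rw [hP ⟨n - 1, h⟩, if_neg (by show ¬ (n - 1 ≤ (i : ℕ)); omega)]
  rw [ha, hb]
  constructor
  · rw [LinearIndependent.pair_iff]
    intro s t hst
    have h2 : s • fv n i + (t - s) • gv n i = (0 : ℝ) • fv n i + (0 : ℝ) • gv n i := by
      rw [show s • fv n i + (t - s) • gv n i = s • (fv n i - gv n i) + t • gv n i from by module,
        hst]
      module
    obtain ⟨hs, ht⟩ := st_inj i hi h2
    exact ⟨hs, by linarith⟩
  · ext x
    constructor
    · intro hx
      obtain ⟨hx1, hx2⟩ := hx
      obtain ⟨s, t, h12, rfl⟩ := rr_sub i hi x hx1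
      simp only [Set.mem_insert_iff, Set.mem_singleton_iff]
      rcases h12 with ⟨rfl, rfl⟩ | ⟨rfl, rfl⟩ | ⟨rfl, rfl⟩ | ⟨rfl, rfl⟩ | ⟨rfl, rfl⟩ | ⟨rfl, rfl⟩ |
        ⟨rfl, rfl⟩ | ⟨rfl, rfl⟩ | ⟨rfl, rfl⟩ | ⟨rfl, rfl⟩ | ⟨rfl, rfl⟩ | ⟨rfl, rfl⟩
      · exact Or.inr (Or.inr (Or.inr (Or.inr (Or.inl (by module)))))
      · exact Or.inr (Or.inr (Or.inr (Or.inr (Or.inr (Or.inl (by module))))))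
      · exact Or.inr (Or.inr (Or.inl (by module)))
      · exact Or.inr (Or.inr (Or.inr (Or.inl (by module))))
      · exact Or.inl (by module)
      · exact Or.inr (Or.inl (by module))
      · exact Or.inr (Or.inr (Or.inr (Or.inr (Or.inr (Or.inr (Or.inl (by module)))))))
      · exact Or.inr (Or.inr (Or.inr (Or.inr (Or.inr (Or.inr (Or.inr (by module)))))))
      · exact absurd (by
          rw [show (1 / 2 : ℝ) • ((2 : ℝ) • fv n i + (0 : ℝ) • gv n i)
              = (1 : ℝ) • fv n i + (0 : ℝ) • gv n i from by module]
          exact mem_rr i hi 1 0 (by unfold pred8; norm_num)) hx2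
      · exact absurd (by
          rw [show (1 / 2 : ℝ) • ((-2 : ℝ) • fv n i + (0 : ℝ) • gv n i)
              = (-1 : ℝ) • fv n i + (0 : ℝ) • gv n i from by module]
          exact mem_rr i hi (-1) 0 (by unfold pred8; norm_num)) hx2
      · exact absurd (by
          rw [show (1 / 2 : ℝ) • ((0 : ℝ) • fv n i + (2 : ℝ) • gv n i)
              = (0 : ℝ) • fv n i + (1 : ℝ) • gv n i from by module]
          exact mem_rr i hi 0 1 (by unfold pred8; norm_num)) hx2
      · exact absurd (by
          rw [show (1 / 2 : ℝ) • ((0 : ℝ) • fv n i + (-2 : ℝ) • gv n i)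
              = (0 : ℝ) • fv n i + (-1 : ℝ) • gv n i from by module]
          exact mem_rr i hi 0 (-1) (by unfold pred8; norm_num)) hx2
    · intro hx
      simp only [Set.mem_insert_iff, Set.mem_singleton_iff] at hx
      rcases hx with rfl | rfl | rfl | rfl | rfl | rfl | rfl | rfl
      · rw [show fv n i - gv n i = (1 : ℝ) • fv n i + (-1 : ℝ) • gv n i from by module]
        exact mem_red i hi 1 (-1) (by unfold pred8; norm_num)
      · rw [show -(fv n i - gv n i) = (-1 : ℝ) • fv n i + (1 : ℝ) • gv n i from by module]
        exact mem_red i hi (-1) 1 (by unfold pred8; norm_num)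
      · rw [show gv n i = (0 : ℝ) • fv n i + (1 : ℝ) • gv n i from by module]
        exact mem_red i hi 0 1 (by unfold pred8; norm_num)
      · rw [show -gv n i = (0 : ℝ) • fv n i + (-1 : ℝ) • gv n i from by module]
        exact mem_red i hi 0 (-1) (by unfold pred8; norm_num)
      · rw [show fv n i - gv n i + gv n i = (1 : ℝ) • fv n i + (0 : ℝ) • gv n i from by module]
        exact mem_red i hi 1 0 (by unfold pred8; norm_num)
      · rw [show -(fv n i - gv n i + gv n i) = (-1 : ℝ) • fv n i + (0 : ℝ) • gv n i from by module]
        exact mem_red i hi (-1) 0 (by unfold pred8; norm_num)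
      · rw [show fv n i - gv n i + (2 : ℝ) • gv n i = (1 : ℝ) • fv n i + (1 : ℝ) • gv n i from by module]
        exact mem_red i hi 1 1 (by unfold pred8; norm_num)
      · rw [show -(fv n i - gv n i + (2 : ℝ) • gv n i) = (-1 : ℝ) • fv n i + (-1 : ℝ) • gv n i from by module]
        exact mem_red i hi (-1) (-1) (by unfold pred8; norm_num)

end
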